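/- (Lemma A.1, fourth inequality) Let 0 < t < s be real numbers, let θ ∈ ℂ with |θ| ≤ 1/30, let x ∈ ℝ³ and j ∈ {1,2,3}. Then ∑_{λ∈{0,1}} ∫_{{k∈ℝ³ : t ≤ |k| ≤ s}} |k|² · |G(θ)_j(x,(k,λ))|² d³k ≤ α³ · min( C₁² · e/2 , C₂² · s³·(s−t) ). -/

import Mathlib

open MeasureTheory

noncomputable section

/-- `ℝ³` as a Euclidean space. -/
abbrev R3 : Type := EuclideanSpace ℝ (Fin 3)

/-- The coupling function `G(θ)(x,(k,λ))`, `j`-th component. -/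
def Gfun (α : ℝ) (ε : R3 → Fin 2 → Fin 3 → ℂ) (θ : ℂ)
    (x k : R3) (lam : Fin 2) (j : Fin 3) : ℂ :=
  ((α ^ ((3:ℝ)/2) / (2 * Real.pi) ^ ((3:ℝ)/2) : ℝ) : ℂ) * Complex.exp (-θ) *
    Complex.exp (-(Complex.exp (-(2*θ))) * ((‖k‖ ^ 2 : ℝ) : ℂ)) *
    (((2 * ‖k‖) ^ (-(1:ℝ)/2) : ℝ) : ℂ) *
    Complex.exp (-Complex.I * (α : ℂ) * ((inner ℝ k x : ℝ) : ℂ)) *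
    ε k lam j

/-- The polarization vectors form an a.e. orthonormal transversal family. -/
def Polarization (ε : R3 → Fin 2 → Fin 3 → ℂ) : Prop :=
  Measurable ε ∧
  ∀ᵐ k ∂(volume : Measure R3), k ≠ 0 →
    ∀ lam mu : Fin 2,
      (∑ j : Fin 3, (starRingEnd ℂ) (ε k lam j) * ε k mu j) = (if lam = mu then 1 else 0) ∧
      (∑ j : Fin 3, ((k j : ℝ) : ℂ) * ε k lam j) = 0

def C1 : ℝ := Real.exp (3/4) / (2 * Real.pi)

def C2 : ℝ := Real.sqrt 2 * Real.exp (1/4) / (2 * Real.pi)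

def C1om : ℝ := Real.exp (1/2) * Real.pi ^ ((1:ℝ)/4) / (2 ^ ((1:ℝ)/4) * (2 * Real.pi))

lemma Gfun_abs_sq (α : ℝ) (hα0 : 0 < α) (ε : R3 → Fin 2 → Fin 3 → ℂ) (θ : ℂ)
    (x k : R3) (lam : Fin 2) (j : Fin 3) (hk : k ≠ 0) :
    ‖k‖ ^ 2 * ‖Gfun α ε θ x k lam j‖ ^ 2 =
      α ^ 3 / (2 * Real.pi) ^ 3 * Real.exp (-(2*θ.re)) *
        Real.exp (-(2 * (Complex.exp (-(2*θ))).re) * ‖k‖^2) * (‖k‖ / 2) *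
        ‖ε k lam j‖ ^ 2 := by
  have hπ := Real.pi_pos
  have hr : 0 < ‖k‖ := norm_pos_iff.mpr hk
  have h2r : (0:ℝ) < 2*‖k‖ := by positivity
  have hA : (0:ℝ) ≤ α ^ ((3:ℝ)/2) / (2 * Real.pi) ^ ((3:ℝ)/2) := by positivity
  have hre1 : (-(Complex.exp (-(2*θ))) * ((‖k‖ ^ 2 : ℝ) : ℂ)).re
      = -((Complex.exp (-(2*θ))).re * ‖k‖^2) := by
    simp [Complex.mul_re, ← Complex.ofReal_pow]
  have hre2 : (-Complex.I * (α : ℂ) * ((inner ℝ k x : ℝ) : ℂ)).re = 0 := by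
    simp [Complex.mul_re, Complex.mul_im]
  have hsq : ∀ a : ℝ, 0 ≤ a → (a ^ ((3:ℝ)/2))^2 = a^3 := by
    intro a ha
    rw [← Real.rpow_natCast (a ^ ((3:ℝ)/2)) 2, ← Real.rpow_mul ha]
    rw [show (3:ℝ)/2 * (2:ℕ) = ((3:ℕ):ℝ) by norm_num, Real.rpow_natCast]
  have hexp2 : ∀ y : ℝ, Real.exp y ^ 2 = Real.exp (2*y) := by
    intro y; rw [sq, ← Real.exp_add]; ring_nf
  have hrp : ((2*‖k‖) ^ (-(1:ℝ)/2))^2 = (2*‖k‖)⁻¹ := by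
    rw [← Real.rpow_natCast ((2*‖k‖) ^ (-(1:ℝ)/2)) 2, ← Real.rpow_mul h2r.le]
    rw [show -(1:ℝ)/2 * (2:ℕ) = -1 by norm_num, Real.rpow_neg_one]
  unfold Gfun
  rw [norm_mul, norm_mul, norm_mul, norm_mul, norm_mul, Complex.norm_exp, Complex.norm_exp,
    Complex.norm_exp, Complex.norm_real, Complex.norm_real, Real.norm_eq_abs, Real.norm_eq_abs, hre1, hre2,
    abs_of_nonneg hA, abs_of_nonneg (by positivity : (0:ℝ) ≤ (2*‖k‖) ^ (-(1:ℝ)/2))]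
  rw [Real.exp_zero]
  rw [mul_pow, mul_pow, mul_pow, mul_pow, mul_pow, hrp, hexp2, hexp2]
  rw [div_pow] at *
  rw [hsq α hα0.le, hsq (2*Real.pi) (by positivity), Complex.neg_re]
  have : Real.exp (2 * -((Complex.exp (-(2 * θ))).re * ‖k‖ ^ 2))
      = Real.exp (-(2 * (Complex.exp (-(2*θ))).re) * ‖k‖^2) := by ring_nf
  rw [this]
  field_simp

lemma exp_re_ge (θ : ℂ) (hθ : ‖θ‖ ≤ 1/30) :
    (3:ℝ)/4 ≤ (Complex.exp (-(2*θ))).re := by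
  have h1 : ‖-(2*θ)‖ ≤ 1 := by
    rw [norm_neg, norm_mul]
    simp only [Complex.norm_two]
    nlinarith
  have h2 := Complex.norm_exp_sub_one_le h1
  have h3 : ‖-(2*θ)‖ = 2 * ‖θ‖ := by
    rw [norm_neg, norm_mul]; simp [Complex.norm_two]
  have h4 : (1 : ℝ) - (Complex.exp (-(2*θ))).re ≤ 2 * (2 * ‖θ‖) := by
    calc (1:ℝ) - (Complex.exp (-(2*θ))).re = (1 - Complex.exp (-(2*θ))).re := by simp
    _ ≤ ‖1 - Complex.exp (-(2*θ))‖ := Complex.re_le_norm _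
    _ = ‖Complex.exp (-(2*θ)) - 1‖ := by rw [← norm_neg]; ring_nf
    _ ≤ 2 * ‖-(2*θ)‖ := h2
    _ = 2 * (2 * ‖θ‖) := by rw [h3]
  nlinarith

lemma gauss_key (r : ℝ) (hr : 0 ≤ r) :
    r / 2 * Real.exp (-(3/2) * r^2) ≤ 1/2 * Real.exp (-(1:ℝ) * r^2) := by
  have h1 : Real.exp (-(3/2) * r^2) = Real.exp (-(r^2/2)) * Real.exp (-(1:ℝ)*r^2) := by
    rw [← Real.exp_add]; ring_nf
  have h2 : r * Real.exp (-(r^2/2)) ≤ 1 := by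
    have h3 : r ≤ Real.exp (r^2/2) := by
      have := Real.add_one_le_exp (r^2/2)
      nlinarith [sq_nonneg (r - 1)]
    have h4 : Real.exp (-(r^2/2)) = (Real.exp (r^2/2))⁻¹ := by
      rw [← Real.exp_neg]
    rw [h4]
    rw [mul_inv_le_iff₀ (Real.exp_pos _), one_mul]
    exact h3
  rw [h1]
  have := Real.exp_pos (-(1:ℝ)*r^2)
  nlinarith

lemma pointwise_bound (α : ℝ) (hα0 : 0 < α) (ε : R3 → Fin 2 → Fin 3 → ℂ) (θ : ℂ)
    (hθ : ‖θ‖ ≤ 1/30)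
    (x k : R3) (lam : Fin 2) (j : Fin 3) (hk : k ≠ 0)
    (hε1 : ‖ε k lam j‖ ≤ 1) :
    ‖k‖ ^ 2 * ‖Gfun α ε θ x k lam j‖ ^ 2 ≤
      α ^ 3 / (2 * Real.pi) ^ 3 * Real.exp (1/15) *
        (‖k‖ / 2 * Real.exp (-(3/2) * ‖k‖^2)) := by
  have hπ := Real.pi_pos
  have hr : 0 < ‖k‖ := norm_pos_iff.mpr hk
  rw [Gfun_abs_sq α hα0 ε θ x k lam j hk]
  have hC : (0:ℝ) ≤ α ^ 3 / (2 * Real.pi) ^ 3 := by positivity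
  have hb1 : Real.exp (-(2*θ.re)) ≤ Real.exp (1/15) := by
    apply Real.exp_le_exp.2
    have := Complex.abs_re_le_norm θ
    rw [abs_le] at this
    linarith [this.1]
  have hb2 : Real.exp (-(2 * (Complex.exp (-(2*θ))).re) * ‖k‖^2)
      ≤ Real.exp (-(3/2) * ‖k‖^2) := by
    apply Real.exp_le_exp.2
    have := exp_re_ge θ hθ
    nlinarith [sq_nonneg ‖k‖]
  have hb3 : ‖ε k lam j‖ ^ 2 ≤ 1 :=
    pow_le_one₀ (norm_nonneg _) hε1
  calc α ^ 3 / (2 * Real.pi) ^ 3 * Real.exp (-(2*θ.re)) *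
        Real.exp (-(2 * (Complex.exp (-(2*θ))).re) * ‖k‖^2) * (‖k‖ / 2) *
        ‖ε k lam j‖ ^ 2
      ≤ α ^ 3 / (2 * Real.pi) ^ 3 * Real.exp (1/15) *
        Real.exp (-(3/2) * ‖k‖^2) * (‖k‖ / 2) * 1 := by
        gcongr <;> positivity
    _ = α ^ 3 / (2 * Real.pi) ^ 3 * Real.exp (1/15) *
        (‖k‖ / 2 * Real.exp (-(3/2) * ‖k‖^2)) := by ring

lemma eps_ae_bound (ε : R3 → Fin 2 → Fin 3 → ℂ) (hε : Polarization ε)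
    (lam : Fin 2) (j : Fin 3) :
    ∀ᵐ k ∂(volume : Measure R3), k ≠ 0 → ‖ε k lam j‖ ≤ 1 := by
  filter_upwards [hε.2] with k hk hk0
  have h := (hk hk0 lam lam).1
  simp only [if_pos rfl] at h
  have h2 : ∀ i : Fin 3, (starRingEnd ℂ) (ε k lam i) * ε k lam i
      = ((‖ε k lam i‖ ^ 2 : ℝ) : ℂ) := by
    intro i
    rw [mul_comm, Complex.mul_conj, Complex.sq_norm]
  rw [Finset.sum_congr rfl (fun i _ => h2 i)] at h
  have h3 : (∑ i : Fin 3, ‖ε k lam i‖ ^ 2) = 1 := by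
    have := h
    push_cast at this
    exact_mod_cast this
  have h4 : ‖ε k lam j‖ ^ 2 ≤ 1 := by
    rw [← h3]
    exact Finset.single_le_sum (f := fun i : Fin 3 => ‖ε k lam i‖ ^ 2)
      (fun i _ => by positivity) (Finset.mem_univ j)
  nlinarith [norm_nonneg (ε k lam j)]

lemma meas_rpow : Measurable fun r : ℝ => r ^ (-(1:ℝ)/2) := by measurability

lemma meas_integrand (α : ℝ) (ε : R3 → Fin 2 → Fin 3 → ℂ) (hmε : Measurable ε)
    (θ : ℂ) (x : R3) (lam : Fin 2) (j : Fin 3) :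
    Measurable fun k : R3 => ‖k‖ ^ 2 * ‖Gfun α ε θ x k lam j‖ ^ 2 := by
  have h1 : Measurable fun k : R3 => ε k lam j := (hmε.eval (a := lam)).eval (a := j)
  have h2 : Continuous fun k : R3 => (inner ℝ k x : ℝ) :=
    continuous_id.inner continuous_const
  have hm2 : Measurable fun k : R3 => Complex.exp (-(Complex.exp (-(2*θ))) * ((‖k‖ ^ 2 : ℝ) : ℂ)) := by
    apply (Complex.continuous_exp.comp ?_).measurable
    exact continuous_const.mul (Complex.continuous_ofReal.comp (continuous_norm.pow 2))
  have hm4 : Measurable fun k : R3 => (((2 * ‖k‖) ^ (-(1:ℝ)/2) : ℝ) : ℂ) :=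
    Complex.measurable_ofReal.comp (meas_rpow.comp (measurable_norm.const_mul 2))
  have hm5 : Measurable fun k : R3 => Complex.exp (-Complex.I * (α : ℂ) * ((inner ℝ k x : ℝ) : ℂ)) := by
    apply (Complex.continuous_exp.comp ?_).measurable
    exact continuous_const.mul (Complex.continuous_ofReal.comp h2)
  have h3 : Measurable fun k : R3 => Gfun α ε θ x k lam j := by
    unfold Gfun
    exact ((((measurable_const.mul hm2).mul hm4).mul hm5).mul h1)
  exact (measurable_norm.pow_const 2).mul (((continuous_norm.measurable.comp h3)).pow_const 2)

lemma gamma_52 : Real.Gamma ((3:ℝ)/2 + 1) = 3/4 * Real.sqrt Real.pi := by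
  rw [Real.Gamma_add_one (by norm_num)]
  rw [show (3:ℝ)/2 = 1/2 + 1 by norm_num, Real.Gamma_add_one (by norm_num),
    Real.Gamma_one_half_eq]
  ring

lemma vol_ball3 (r : ℝ) (hr : 0 ≤ r) :
    volume (Metric.ball (0:R3) r) = ENNReal.ofReal (4 * Real.pi / 3 * r^3) := by
  have hπ := Real.pi_pos
  have hs3 : Real.sqrt Real.pi ^ 3 = Real.pi * Real.sqrt Real.pi := by
    rw [pow_succ, Real.sq_sqrt Real.pi_nonneg]
  have hsne : Real.sqrt Real.pi ≠ 0 := (Real.sqrt_pos.2 hπ).ne'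
  rw [EuclideanSpace.volume_ball]
  simp only [Fintype.card_fin]
  rw [show ((3:ℕ):ℝ)/2 + 1 = (3:ℝ)/2 + 1 by norm_num, gamma_52, hs3]
  rw [show Real.pi * Real.sqrt Real.pi / (3/4 * Real.sqrt Real.pi) = 4 * Real.pi / 3 by
    field_simp]
  rw [← ENNReal.ofReal_pow hr, ← ENNReal.ofReal_mul (by positivity), mul_comm]

lemma vol_closedBall3 (r : ℝ) (hr : 0 ≤ r) :
    volume (Metric.closedBall (0:R3) r) = ENNReal.ofReal (4 * Real.pi / 3 * r^3) := by
  rw [MeasureTheory.Measure.addHaar_closedBall_eq_addHaar_ball, vol_ball3 r hr]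

lemma gauss_int :
    (∫ k : R3, Real.exp (-(1:ℝ) * ‖k‖^2)) = Real.pi ^ (((3:ℕ):ℝ)/2) := by
  rw [GaussianFourier.integral_rexp_neg_mul_sq_norm (by norm_num : (0:ℝ) < 1)]
  norm_num [finrank_euclideanSpace_fin]

lemma gauss_integrable : Integrable (fun k : R3 => Real.exp (-(1:ℝ) * ‖k‖^2)) := by
  have h := (GaussianFourier.integrable_cexp_neg_mul_sq_norm_add (V := R3) (b := 1)
    (by norm_num) 0 (0 : R3)).norm
  apply h.congr
  filter_upwards with v
  rw [Complex.norm_exp]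
  rw [show (-1 * (‖v‖:ℂ) ^ 2 + 0 * ((inner ℝ 0 v : ℝ):ℂ)) = ((-1 * ‖v‖^2 : ℝ) : ℂ) by push_cast; ring,
    Complex.ofReal_re]

lemma K1 : Real.exp (1/15) * Real.pi ^ (((3:ℕ):ℝ)/2)
    ≤ Real.pi * (Real.exp (3/4) ^ 2 * Real.exp 1) := by
  have hπ1 : (1:ℝ) ≤ Real.pi := by nlinarith [Real.pi_gt_three]
  have h32 : Real.pi ^ (((3:ℕ):ℝ)/2) ≤ Real.pi ^ ((2:ℕ):ℝ) :=
    Real.rpow_le_rpow_of_exponent_le hπ1 (by norm_num)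
  have h2 : Real.pi ^ ((2:ℕ):ℝ) = Real.pi ^ 2 := Real.rpow_natCast Real.pi 2
  have he2 : Real.exp 2 = Real.exp 1 * Real.exp 1 := by rw [← Real.exp_add]; norm_num
  have hπe : Real.pi ≤ Real.exp 2 := by
    nlinarith [Real.exp_one_gt_d9, Real.pi_lt_d2]
  have hee : Real.exp (1/15) ≤ Real.exp (1/2) := Real.exp_le_exp.2 (by norm_num)
  have hrhs : Real.exp (3/4) ^ 2 * Real.exp 1 = Real.exp (1/2) * Real.exp 2 := by
    rw [sq, ← Real.exp_add, ← Real.exp_add, ← Real.exp_add]; norm_num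
  have hP0 : (0:ℝ) ≤ Real.pi ^ (((3:ℕ):ℝ)/2) := Real.rpow_nonneg Real.pi_nonneg _
  rw [hrhs]
  calc Real.exp (1/15) * Real.pi ^ (((3:ℕ):ℝ)/2)
      ≤ Real.exp (1/2) * Real.pi ^ 2 := by
        rw [← h2]; exact mul_le_mul hee h32 hP0 (Real.exp_pos _).le
    _ ≤ Real.pi * (Real.exp (1/2) * Real.exp 2) := by
        nlinarith [mul_le_mul_of_nonneg_left hπe
          (mul_nonneg (Real.exp_pos (1/2)).le Real.pi_nonneg)]

lemma num1 (a : ℝ) (ha : 0 < a) :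
    a / (2*Real.pi)^3 * Real.exp (1/15) * Real.pi ^ (((3:ℕ):ℝ)/2)
      ≤ a * (C1^2 * (Real.exp 1 / 2)) := by
  have hπ := Real.pi_pos
  have hK := K1
  unfold C1
  rw [div_pow]
  rw [div_mul_eq_mul_div, div_mul_eq_mul_div, div_le_iff₀ (by positivity)]
  rw [show a * (Real.exp (3/4)^2 / (2*Real.pi)^2 * (Real.exp 1 / 2)) =
    a * Real.exp (3/4)^2 * Real.exp 1 / (2 * (2*Real.pi)^2) by ring, div_mul_eq_mul_div,
    le_div_iff₀ (by positivity)]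
  have h0 : (0:ℝ) ≤ a * 4 * Real.pi ^ 2 := by positivity
  nlinarith [mul_le_mul_of_nonneg_left hK h0]

lemma num2 (a s t : ℝ) (ha : 0 < a) (ht : 0 < t) (hts : t < s) :
    a/(2*Real.pi)^3 * Real.exp (1/15) * s * (4*Real.pi/3*(s^3-t^3))
      ≤ a * (C2^2 * s^3 * (s-t)) := by
  have hπ := Real.pi_pos
  have hs : 0 < s := ht.trans hts
  have hcube : s^3 - t^3 ≤ 3*s^2*(s-t) := by nlinarith [sq_nonneg (s-t), ht.le, hts.le]
  have hE : Real.exp (1/15) ≤ Real.exp (1/4)^2 := by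
    rw [sq, ← Real.exp_add]; exact Real.exp_le_exp.2 (by norm_num)
  have hC2 : C2^2 = 2 * Real.exp (1/4)^2 / (2*Real.pi)^2 := by
    unfold C2
    rw [div_pow, mul_pow, Real.sq_sqrt (by norm_num : (0:ℝ) ≤ 2)]
  rw [hC2]
  have step1 : a/(2*Real.pi)^3 * Real.exp (1/15) * s * (4*Real.pi/3*(s^3-t^3))
      ≤ a/(2*Real.pi)^3 * Real.exp (1/15) * s * (4*Real.pi/3*(3*s^2*(s-t))) := by
    apply mul_le_mul_of_nonneg_left _ (by positivity)
    apply mul_le_mul_of_nonneg_left hcube (by positivity)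
  refine step1.trans ?_
  rw [show a/(2*Real.pi)^3 * Real.exp (1/15) * s * (4*Real.pi/3*(3*s^2*(s-t)))
      = a * Real.exp (1/15) * s^3 * (s-t) * (4*Real.pi) / (2*Real.pi)^3 by ring,
    show a * (2 * Real.exp (1/4)^2/(2*Real.pi)^2 * s^3 * (s-t))
      = a * Real.exp (1/4)^2 * s^3 * (s-t) * 2 / (2*Real.pi)^2 by ring]
  rw [div_le_div_iff₀ (by positivity) (by positivity)]
  have h1 : 0 ≤ a * s^3 * (s-t) * ((2*Real.pi)^3 * 2) :=
    mul_nonneg (mul_nonneg (by positivity) (by linarith)) (by positivity)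
  nlinarith [mul_le_mul_of_nonneg_left hE h1]

/-- Lemma A.1, fourth inequality. -/
theorem lemmaA1_fourth
    (α : ℝ) (hα0 : 0 < α) (hα1 : α ≤ 1)
    (ε : R3 → Fin 2 → Fin 3 → ℂ) (hε : Polarization ε)
    (s t : ℝ) (ht : 0 < t) (hts : t < s)
    (θ : ℂ) (hθ : ‖θ‖ ≤ 1/30)
    (x : R3) (j : Fin 3) :
    (∑ lam : Fin 2, ∫ k in {k : R3 | t ≤ ‖k‖ ∧ ‖k‖ ≤ s},
        ‖k‖ ^ 2 * ‖Gfun α ε θ x k lam j‖ ^ 2)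
      ≤ α ^ 3 * min (C1 ^ 2 * (Real.exp 1 / 2)) (C2 ^ 2 * s ^ 3 * (s - t)) := by
  have hπ := Real.pi_pos
  have hs : 0 < s := ht.trans hts
  set S : Set R3 := {k : R3 | t ≤ ‖k‖ ∧ ‖k‖ ≤ s} with hSdef
  have hSm : MeasurableSet S := by
    have : S = (fun k : R3 => ‖k‖) ⁻¹' (Set.Icc t s) := rfl
    rw [this]; exact measurable_norm measurableSet_Icc
  have hsub : S ⊆ Metric.closedBall (0:R3) s := by
    intro k hk
    rw [Metric.mem_closedBall, dist_zero_right]; exact hk.2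
  have hSfin : volume S < ⊤ :=
    lt_of_le_of_lt (measure_mono hsub) (MeasureTheory.measure_closedBall_lt_top)
  have hVS : (volume S).toReal ≤ 4*Real.pi/3 * (s^3 - t^3) := by
    have hsub2 : S ⊆ Metric.closedBall (0:R3) s \ Metric.ball (0:R3) t := by
      intro k hk
      refine ⟨hsub hk, ?_⟩
      rw [Metric.mem_ball, dist_zero_right]
      exact not_lt.2 hk.1
    have hd : volume (Metric.closedBall (0:R3) s \ Metric.ball (0:R3) t)
        = ENNReal.ofReal (4*Real.pi/3*s^3) - ENNReal.ofReal (4*Real.pi/3*t^3) := by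
      rw [measure_diff ((Metric.ball_subset_ball hts.le).trans Metric.ball_subset_closedBall)
        measurableSet_ball.nullMeasurableSet
        (by rw [vol_ball3 t ht.le]; exact ENNReal.ofReal_ne_top),
        vol_closedBall3 s hs.le, vol_ball3 t ht.le]
    have hle : volume S ≤ ENNReal.ofReal (4*Real.pi/3 * (s^3 - t^3)) := by
      refine (measure_mono hsub2).trans ?_
      rw [hd, ← ENNReal.ofReal_sub _ (by positivity)]
      apply le_of_eq; congr 1; ring
    exact ENNReal.toReal_le_of_le_ofReal
      (by nlinarith [mul_nonneg hπ.le (sub_nonneg.2 (pow_le_pow_left₀ ht.le hts.le 3))]) hle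
  set C : ℝ := α^3/(2*Real.pi)^3 * Real.exp (1/15) with hCdef
  have hC0 : 0 ≤ C := by positivity
  have key : ∀ lam : Fin 2, (∫ k in S, ‖k‖^2 * ‖Gfun α ε θ x k lam j‖^2)
      ≤ min (C * (1/2) * Real.pi ^ (((3:ℕ):ℝ)/2)) (C * (s/2) * (4*Real.pi/3*(s^3-t^3))) := by
    intro lam
    have hzero : ∀ᵐ k ∂(volume : Measure R3), k ≠ 0 := by
      have h0 : volume ({0} : Set R3) = 0 := measure_singleton 0
      rw [MeasureTheory.ae_iff]
      convert h0 using 2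
      ext k; simp
    have haewhole : ∀ᵐ k ∂(volume : Measure R3),
        ‖k‖^2 * ‖Gfun α ε θ x k lam j‖^2
          ≤ C * (‖k‖/2 * Real.exp (-(3/2)*‖k‖^2)) := by
      filter_upwards [eps_ae_bound ε hε lam j, hzero] with k h1 h2
      exact pointwise_bound α hα0 ε θ hθ x k lam j h2 (h1 h2)
    have haeS := MeasureTheory.ae_restrict_of_ae (s := S) haewhole
    have haeSmem := MeasureTheory.ae_restrict_mem (μ := (volume : Measure R3)) hSm
    set g1 : R3 → ℝ := fun k => C/2 * Real.exp (-(1:ℝ)*‖k‖^2) with hg1def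
    have hg1 : Integrable g1 := gauss_integrable.const_mul (C/2)
    have hptA : ∀ k : R3, C * (‖k‖/2 * Real.exp (-(3/2)*‖k‖^2)) ≤ g1 k := by
      intro k
      have hgk := gauss_key ‖k‖ (norm_nonneg k)
      calc C * (‖k‖/2 * Real.exp (-(3/2)*‖k‖^2))
          ≤ C * (1/2 * Real.exp (-(1:ℝ)*‖k‖^2)) := mul_le_mul_of_nonneg_left hgk hC0
        _ = g1 k := by rw [hg1def]; ring
    have hint_h : IntegrableOn
        (fun k : R3 => ‖k‖^2 * ‖Gfun α ε θ x k lam j‖^2) S := by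
      refine Integrable.mono' hg1.integrableOn
        (meas_integrand α ε hε.1 θ x lam j).aestronglyMeasurable.restrict ?_
      filter_upwards [haeS] with k hk
      rw [Real.norm_of_nonneg (by positivity)]
      exact hk.trans (hptA k)
    have boundA : (∫ k in S, ‖k‖^2 * ‖Gfun α ε θ x k lam j‖^2)
        ≤ C * (1/2) * Real.pi ^ (((3:ℕ):ℝ)/2) := by
      have i1 : (∫ k in S, ‖k‖^2 * ‖Gfun α ε θ x k lam j‖^2)
          ≤ ∫ k in S, g1 k := by
        refine integral_mono_ae hint_h hg1.integrableOn ?_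
        filter_upwards [haeS] with k hk
        exact hk.trans (hptA k)
      have i2 : (∫ k in S, g1 k) ≤ ∫ k, g1 k := by
        refine setIntegral_le_integral hg1 ?_
        filter_upwards with k
        simp only [hg1def, Pi.zero_apply]
        positivity
      have i3 : (∫ k, g1 k) = C * (1/2) * Real.pi ^ (((3:ℕ):ℝ)/2) := by
        rw [hg1def]
        rw [MeasureTheory.integral_const_mul, gauss_int]
        ring
      linarith
    have boundB : (∫ k in S, ‖k‖^2 * ‖Gfun α ε θ x k lam j‖^2)
        ≤ C * (s/2) * (4*Real.pi/3*(s^3-t^3)) := by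
      have i1 : (∫ k in S, ‖k‖^2 * ‖Gfun α ε θ x k lam j‖^2)
          ≤ ∫ _ in S, C * (s/2) := by
        refine integral_mono_ae hint_h (MeasureTheory.integrableOn_const hSfin.ne) ?_
        filter_upwards [haeS, haeSmem] with k hk hkS
        refine hk.trans ?_
        have h1 : Real.exp (-(3/2)*‖k‖^2) ≤ 1 := Real.exp_le_one_iff.2 (by nlinarith [sq_nonneg ‖k‖])
        have h2 : ‖k‖ ≤ s := hkS.2
        have h3 : ‖k‖/2 * Real.exp (-(3/2)*‖k‖^2) ≤ s/2 := by
          calc ‖k‖/2 * Real.exp (-(3/2)*‖k‖^2) ≤ ‖k‖/2 * 1 :=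
            mul_le_mul_of_nonneg_left h1 (by positivity)
          _ ≤ s/2 := by linarith
        exact mul_le_mul_of_nonneg_left h3 hC0
      have i2 : (∫ _ in S, C * (s/2)) = (volume S).toReal * (C * (s/2)) := by
        rw [MeasureTheory.setIntegral_const, smul_eq_mul, Measure.real]
      have i3 : (volume S).toReal * (C * (s/2)) ≤ C * (s/2) * (4*Real.pi/3*(s^3-t^3)) := by
        rw [mul_comm]
        exact mul_le_mul_of_nonneg_left hVS (by positivity)
      linarith
    exact le_min boundA boundB
  have hsum : (∑ lam : Fin 2, ∫ k in S, ‖k‖^2 * ‖Gfun α ε θ x k lam j‖^2)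
      = (∫ k in S, ‖k‖^2 * ‖Gfun α ε θ x k (0:Fin 2) j‖^2)
        + (∫ k in S, ‖k‖^2 * ‖Gfun α ε θ x k (1:Fin 2) j‖^2) :=
    Fin.sum_univ_two _
  rw [mul_min_of_nonneg _ _ (by positivity : (0:ℝ) ≤ α^3)]
  apply le_min
  · have h0 := (key 0).trans (min_le_left _ _)
    have h1 := (key 1).trans (min_le_left _ _)
    have hn := num1 (α^3) (by positivity)
    calc (∑ lam : Fin 2, ∫ k in S, ‖k‖^2 * ‖Gfun α ε θ x k lam j‖^2)
        ≤ C * (1/2) * Real.pi ^ (((3:ℕ):ℝ)/2) + C * (1/2) * Real.pi ^ (((3:ℕ):ℝ)/2) := by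
          rw [hsum]; exact add_le_add h0 h1
      _ = α^3/(2*Real.pi)^3 * Real.exp (1/15) * Real.pi ^ (((3:ℕ):ℝ)/2) := by
          rw [hCdef]; ring
      _ ≤ α^3 * (C1^2 * (Real.exp 1 / 2)) := hn
  · have h0 := (key 0).trans (min_le_right _ _)
    have h1 := (key 1).trans (min_le_right _ _)
    have hn := num2 (α^3) s t (by positivity) ht hts
    calc (∑ lam : Fin 2, ∫ k in S, ‖k‖^2 * ‖Gfun α ε θ x k lam j‖^2)
        ≤ C * (s/2) * (4*Real.pi/3*(s^3-t^3)) + C * (s/2) * (4*Real.pi/3*(s^3-t^3)) := by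
          rw [hsum]; exact add_le_add h0 h1
      _ = α^3/(2*Real.pi)^3 * Real.exp (1/15) * s * (4*Real.pi/3*(s^3-t^3)) := by
          rw [hCdef]; ring
      _ ≤ α^3 * (C2^2 * s^3 * (s-t)) := hn

end
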